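/- arXiv:1504.02052 — 2 statements merged into one kernel-verified Lean document; each statement's English description precedes it below -/
import Mathlib

section
/- Under a lex-optimal allocation with at least two distinct exchange ratio levels, every node in the highest level set L_K (nodes with maximum exchange ratio l_K) allocates all of its resource to nodes outside L_K; i.e., Out(L_K) = ∑_{i∈L_K} D_i. -/
open Finset

noncomputable section

variable {V : Type*}

/-- An allocation: nonnegative, supported on edges, each node distributes its full endowment. -/
def IsAlloc [Fintype V] [DecidableEq V] (G : SimpleGraph V) [DecidableRel G.Adj]
    (D : V → ℝ) (d : V → V → ℝ) : Prop :=
  (∀ i j, 0 ≤ d i j) ∧ (∀ i j, ¬ G.Adj i j → d i j = 0) ∧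
  (∀ i, ∑ j ∈ G.neighborFinset i, d i j = D i)

/-- Received resource of node `i`. -/
def recv [Fintype V] [DecidableEq V] (G : SimpleGraph V) [DecidableRel G.Adj]
    (d : V → V → ℝ) (i : V) : ℝ := ∑ j ∈ G.neighborFinset i, d j i

/-- Exchange ratio of node `i`. -/
def ratio [Fintype V] [DecidableEq V] (G : SimpleGraph V) [DecidableRel G.Adj]
    (D : V → ℝ) (d : V → V → ℝ) (i : V) : ℝ := recv G d i / D i

/-- Total resource flowing into `S` from outside. -/
def inFlow [Fintype V] [DecidableEq V] (G : SimpleGraph V) [DecidableRel G.Adj]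
    (d : V → V → ℝ) (S : Finset V) : ℝ :=
  ∑ i ∈ S, ∑ j ∈ G.neighborFinset i \ S, d j i

/-- Total resource flowing out of `S`. -/
def outFlow [Fintype V] [DecidableEq V] (G : SimpleGraph V) [DecidableRel G.Adj]
    (d : V → V → ℝ) (S : Finset V) : ℝ :=
  ∑ i ∈ S, ∑ j ∈ G.neighborFinset i \ S, d i j

/-- Sorted (non-decreasing) list of exchange ratios. -/
def sortedRatios [Fintype V] [DecidableEq V] (G : SimpleGraph V) [DecidableRel G.Adj]
    (D : V → ℝ) (d : V → V → ℝ) : List ℝ :=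
  (Finset.univ.val.map (ratio G D d)).sort (· ≤ ·)

/-- Lexicographic optimality: no allocation gives a lexicographically larger sorted ratio vector. -/
def LexOpt [Fintype V] [DecidableEq V] (G : SimpleGraph V) [DecidableRel G.Adj]
    (D : V → ℝ) (d : V → V → ℝ) : Prop :=
  IsAlloc G D d ∧ ∀ d', IsAlloc G D d' →
    ¬ List.Lex (· < ·) (sortedRatios G D d) (sortedRatios G D d')

/-- Minimum exchange ratio. -/
def minRatio [Fintype V] [Nonempty V] [DecidableEq V] (G : SimpleGraph V) [DecidableRel G.Adj]
    (D : V → ℝ) (d : V → V → ℝ) : ℝ := Finset.univ.inf' Finset.univ_nonempty (ratio G D d)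

/-- Maximum exchange ratio. -/
def maxRatio [Fintype V] [Nonempty V] [DecidableEq V] (G : SimpleGraph V) [DecidableRel G.Adj]
    (D : V → ℝ) (d : V → V → ℝ) : ℝ := Finset.univ.sup' Finset.univ_nonempty (ratio G D d)

/-- The set `L₁` of nodes attaining the minimum exchange ratio. -/
def minSet [Fintype V] [Nonempty V] [DecidableEq V] (G : SimpleGraph V) [DecidableRel G.Adj]
    (D : V → ℝ) (d : V → V → ℝ) : Finset V :=
  Finset.univ.filter (fun i => ratio G D d i = minRatio G D d)

/-- The set `L_K` of nodes attaining the maximum exchange ratio. -/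
def maxSet [Fintype V] [Nonempty V] [DecidableEq V] (G : SimpleGraph V) [DecidableRel G.Adj]
    (D : V → ℝ) (d : V → V → ℝ) : Finset V :=
  Finset.univ.filter (fun i => ratio G D d i = maxRatio G D d)

/-- External neighborhood of a set of nodes. -/
def extNbhd [Fintype V] [DecidableEq V] (G : SimpleGraph V) [DecidableRel G.Adj]
    (S : Finset V) : Finset V := (S.biUnion fun i => G.neighborFinset i) \ S



lemma lex_of_count (v : ℝ) :
    ∀ (L L' : List ℝ), L.Pairwise (· ≤ ·) → L'.Pairwise (· ≤ ·) → L.length = L'.length →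
    (∀ w, w < v → Multiset.count w (↑L : Multiset ℝ) = Multiset.count w (↑L' : Multiset ℝ)) →
    Multiset.count v (↑L' : Multiset ℝ) < Multiset.count v (↑L : Multiset ℝ) →
    List.Lex (· < ·) L L' := by
  intro L
  induction L with
  | nil => intro L' _ _ _ _ hv; simp at hv
  | cons x xs ih =>
    intro L' hs hs' hlen hlow hv
    cases L' with
    | nil => simp at hlen
    | cons y ys =>
      have hx : x ≤ v := by
        have hpos : 0 < Multiset.count v (↑(x :: xs) : Multiset ℝ) :=
          lt_of_le_of_lt (Nat.zero_le _) hv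
        have hvm : v ∈ x :: xs := by
          have := Multiset.count_pos.mp hpos
          simpa using this
        rcases List.mem_cons.mp hvm with h | h
        · exact le_of_eq h.symm
        · exact List.rel_of_pairwise_cons hs h
      rcases lt_trichotomy x y with hxy | hxy | hxy
      · exact List.Lex.rel hxy
      · subst hxy
        apply List.Lex.cons
        apply ih ys hs.of_cons hs'.of_cons (by simpa using hlen)
        · intro w hw
          have := hlow w hw
          simp [← Multiset.cons_coe, Multiset.count_cons] at this ⊢
          omega
        · have := hv
          simp [← Multiset.cons_coe, Multiset.count_cons] at this ⊢
          exact this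
      · exfalso
        have hyv : y < v := lt_of_lt_of_le hxy hx
        have h1 : Multiset.count y (↑(x :: xs) : Multiset ℝ) = 0 := by
          rw [Multiset.count_eq_zero]
          intro hmem
          have hmem' : y ∈ x :: xs := by simpa using hmem
          rcases List.mem_cons.mp hmem' with h | h
          · exact absurd h.symm (ne_of_gt hxy)
          · exact absurd (List.rel_of_pairwise_cons hs h) (not_le_of_gt hxy)
        have h2 : 0 < Multiset.count y (↑(y :: ys) : Multiset ℝ) := by
          rw [Multiset.count_pos]; simp
        rw [hlow y hyv] at h1
        omega


lemma sum_recv [Fintype V] [DecidableEq V] (G : SimpleGraph V) [DecidableRel G.Adj]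
    (D : V → ℝ) (d : V → V → ℝ) (hd : IsAlloc G D d) :
    ∑ i, recv G d i = ∑ i, D i := by
  unfold recv
  calc ∑ i, ∑ j ∈ G.neighborFinset i, d j i
      = ∑ i, ∑ j, if G.Adj i j then d j i else 0 := by
        refine Finset.sum_congr rfl fun i _ => ?_
        rw [SimpleGraph.neighborFinset_eq_filter, Finset.sum_filter]
    _ = ∑ j, ∑ i, if G.Adj i j then d j i else 0 := Finset.sum_comm
    _ = ∑ j, ∑ i ∈ G.neighborFinset j, d j i := by
        refine Finset.sum_congr rfl fun j _ => ?_
        rw [SimpleGraph.neighborFinset_eq_filter, Finset.sum_filter]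
        refine Finset.sum_congr rfl fun i _ => ?_
        simp [G.adj_comm]
    _ = ∑ j, D j := Finset.sum_congr rfl fun j _ => hd.2.2 j

lemma star_lemma [Fintype V] [DecidableEq V] (G : SimpleGraph V) [DecidableRel G.Adj]
    (D : V → ℝ) (hD : ∀ i, 0 < D i) (d : V → V → ℝ) (hopt : LexOpt G D d)
    {x w u : V} (hxw : 0 < d x w) (hadj : G.Adj x u) :
    ratio G D d w ≤ ratio G D d u := by
  by_contra hcon
  push_neg at hcon
  obtain ⟨hpos, hsupp, hsum⟩ := hopt.1
  have hadjxw : G.Adj x w := by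
    by_contra h; rw [hsupp x w h] at hxw; exact lt_irrefl 0 hxw
  have huw : u ≠ w := by rintro rfl; exact lt_irrefl _ hcon
  set ru := ratio G D d u with hru
  set rw' := ratio G D d w with hrw
  set ε := min (d x w) ((rw' - ru) * D w / 2) with hε
  have hsub : 0 < rw' - ru := sub_pos.mpr hcon
  have hεpos : 0 < ε :=
    lt_min hxw (div_pos (mul_pos hsub (hD w)) two_pos)
  have hεxw : ε ≤ d x w := min_le_left _ _
  have hεw : ε / D w < rw' - ru := by
    have h1 : ε ≤ (rw' - ru) * D w / 2 := min_le_right _ _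
    have h2 : ε / D w ≤ (rw' - ru) / 2 := by
      rw [div_le_div_iff₀ (hD w) (by norm_num : (0:ℝ) < 2)]
      calc ε * 2 ≤ ((rw' - ru) * D w / 2) * 2 := by linarith
        _ = (rw' - ru) * D w := by ring
    linarith [half_lt_self hsub]
  have hwu : w ≠ u := huw.symm
  -- the modified allocation
  set d' : V → V → ℝ := fun i j =>
    d i j + (if i = x then (if j = w then -ε else 0) + (if j = u then ε else 0) else 0)
    with hd'
  have hd'row : ∀ p q, d' p q = d p q +
      (if p = x then (if q = w then -ε else 0) + (if q = u then ε else 0) else 0) := by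
    intro p q; rw [hd']
  have halloc' : IsAlloc G D d' := by
    refine ⟨?_, ?_, ?_⟩
    · intro p q
      rw [hd'row]
      by_cases hp : p = x
      · rw [hp, if_pos rfl]
        by_cases hqw : q = w
        · rw [hqw, if_pos rfl, if_neg hwu]
          have := hpos x w; linarith
        · by_cases hqu : q = u
          · rw [hqu, if_neg (by exact huw), if_pos rfl]
            have := hpos x u; linarith
          · rw [if_neg hqw, if_neg hqu]
            have := hpos x q; linarith
      · rw [if_neg hp]; have := hpos p q; linarith
    · intro p q hnadj
      rw [hd'row]
      by_cases hp : p = x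
      · rw [hp] at hnadj ⊢
        have hqw : q ≠ w := by rintro rfl; exact hnadj hadjxw
        have hqu : q ≠ u := by rintro rfl; exact hnadj hadj
        rw [if_pos rfl, if_neg hqw, if_neg hqu, hsupp x q hnadj]
        ring
      · rw [if_neg hp, hsupp p q hnadj]; ring
    · intro p
      by_cases hp : p = x
      · rw [hp]
        have hrow : ∀ j, d' x j = d x j +
            ((if j = w then (-ε : ℝ) else 0) + (if j = u then ε else 0)) := by
          intro j; rw [hd'row, if_pos rfl]
        rw [Finset.sum_congr rfl fun j _ => hrow j]
        rw [Finset.sum_add_distrib, hsum x, Finset.sum_add_distrib]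
        rw [Finset.sum_ite_eq' (G.neighborFinset x) w (fun _ => -ε),
            Finset.sum_ite_eq' (G.neighborFinset x) u (fun _ => ε)]
        simp [SimpleGraph.mem_neighborFinset, hadjxw, hadj]
      · rw [Finset.sum_congr rfl fun j _ => hd'row p j]
        simp only [if_neg hp, add_zero]
        exact hsum p
  -- recv values
  have hrecv : ∀ v : V, recv G d' v = recv G d v +
      ((if v = w then -ε else 0) + (if v = u then ε else 0)) := by
    intro v
    unfold recv
    rw [Finset.sum_congr rfl fun j _ => hd'row j v]
    rw [Finset.sum_add_distrib]
    congr 1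
    have : ∀ j ∈ G.neighborFinset v,
        (if j = x then (if v = w then -ε else 0) + (if v = u then ε else 0) else 0)
        = if j = x then (fun _ : V => (if v = w then -ε else 0) + (if v = u then ε else 0)) j else 0 := by
      intro j _; rfl
    rw [Finset.sum_congr rfl this,
        Finset.sum_ite_eq' (G.neighborFinset v) x
          (fun _ : V => (if v = w then -ε else 0) + (if v = u then ε else 0))]
    by_cases hvw : v = w
    · rw [hvw, if_pos (by rw [SimpleGraph.mem_neighborFinset]; exact hadjxw.symm)]
    · by_cases hvu : v = u
      · rw [hvu, if_pos (by rw [SimpleGraph.mem_neighborFinset]; exact hadj.symm)]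
      · rw [if_neg hvw, if_neg hvu]
        simp
  -- new ratios
  have hDu : (0:ℝ) < ε / D u := div_pos hεpos (hD u)
  have hratw : ratio G D d' w = rw' - ε / D w := by
    show recv G d' w / D w = _
    rw [hrecv w, if_pos rfl, if_neg hwu, add_zero, hrw]
    unfold ratio
    ring
  have hratu : ratio G D d' u = ru + ε / D u := by
    show recv G d' u / D u = _
    rw [hrecv u, if_neg huw, zero_add, if_pos rfl, hru]
    unfold ratio
    ring
  have hrato : ∀ v : V, v ≠ w → v ≠ u → ratio G D d' v = ratio G D d v := by
    intro v hvw hvu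
    show recv G d' v / D v = _
    rw [hrecv v, if_neg hvw, if_neg hvu, add_zero, add_zero]
    rfl
  -- multiset decomposition of univ
  have hwmem : w ∈ (univ : Finset V).erase u := Finset.mem_erase.mpr ⟨hwu, Finset.mem_univ w⟩
  set m : Multiset V := (((univ : Finset V).erase u).erase w).val with hm
  have h1 : w ::ₘ m = ((univ : Finset V).erase u).val := by
    rw [hm, Finset.erase_val]
    exact Multiset.cons_erase (Finset.mem_val.mpr hwmem)
  have h2 : u ::ₘ ((univ : Finset V).erase u).val = (univ : Finset V).val := by
    rw [Finset.erase_val]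
    exact Multiset.cons_erase (Finset.mem_val.mpr (Finset.mem_univ u))
  have huniv : (univ : Finset V).val = u ::ₘ w ::ₘ m := by rw [h1, h2]
  have hmem : ∀ v ∈ m, v ≠ w ∧ v ≠ u := by
    intro v hv
    rw [hm, Finset.mem_def.symm] at hv
    have h3 := Finset.mem_erase.mp hv
    have h4 := Finset.mem_erase.mp h3.2
    exact ⟨h3.1, h4.1⟩
  have hmapeq : m.map (ratio G D d') = m.map (ratio G D d) :=
    Multiset.map_congr rfl (fun v hv => hrato v (hmem v hv).1 (hmem v hv).2)
  have hA : (univ : Finset V).val.map (ratio G D d) = ru ::ₘ rw' ::ₘ m.map (ratio G D d) := by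
    rw [huniv, Multiset.map_cons, Multiset.map_cons, ← hru, ← hrw]
  have hB : (univ : Finset V).val.map (ratio G D d') =
      (ru + ε / D u) ::ₘ (rw' - ε / D w) ::ₘ m.map (ratio G D d) := by
    rw [huniv, Multiset.map_cons, Multiset.map_cons, hratu, hratw, hmapeq]
  -- lex comparison
  have hlex : List.Lex (· < ·) (sortedRatios G D d) (sortedRatios G D d') := by
    unfold sortedRatios
    apply lex_of_count ru
    · exact Multiset.pairwise_sort _ _
    · exact Multiset.pairwise_sort _ _
    · rw [Multiset.length_sort, Multiset.length_sort, hA, hB]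
      simp
    · intro t ht
      rw [Multiset.sort_eq, Multiset.sort_eq, hA, hB]
      rw [Multiset.count_cons, Multiset.count_cons, Multiset.count_cons, Multiset.count_cons]
      rw [if_neg (ne_of_lt (lt_trans ht hcon)), if_neg (ne_of_lt ht),
          if_neg (ne_of_lt (by linarith : t < rw' - ε / D w)),
          if_neg (ne_of_lt (by linarith : t < ru + ε / D u))]
    · rw [Multiset.sort_eq, Multiset.sort_eq, hA, hB]
      rw [Multiset.count_cons, Multiset.count_cons, Multiset.count_cons, Multiset.count_cons]
      rw [if_neg (ne_of_lt hcon), if_pos rfl,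
          if_neg (ne_of_lt (by linarith : ru < rw' - ε / D w)),
          if_neg (ne_of_lt (by linarith : ru < ru + ε / D u))]
      omega
  exact hopt.2 d' halloc' hlex

lemma double_count [Fintype V] [DecidableEq V] (G : SimpleGraph V) [DecidableRel G.Adj]
    (T : Finset V) (g : V → V → ℝ) :
    ∑ v ∈ T, ∑ p ∈ T.filter (fun p => G.Adj v p), g v p
      = ∑ p ∈ T, ∑ v ∈ T.filter (fun v => G.Adj p v), g v p := by
  calc ∑ v ∈ T, ∑ p ∈ T.filter (fun p => G.Adj v p), g v p
      = ∑ v ∈ T, ∑ p ∈ T, if G.Adj v p then g v p else 0 :=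
        Finset.sum_congr rfl (fun v _ => Finset.sum_filter _ _)
    _ = ∑ p ∈ T, ∑ v ∈ T, if G.Adj v p then g v p else 0 := Finset.sum_comm
    _ = ∑ p ∈ T, ∑ v ∈ T.filter (fun v => G.Adj p v), g v p := by
        refine Finset.sum_congr rfl fun p _ => ?_
        rw [Finset.sum_filter]
        refine Finset.sum_congr rfl fun v _ => ?_
        simp [G.adj_comm]

theorem stmt8 [Fintype V] [Nonempty V] [DecidableEq V] (G : SimpleGraph V) [DecidableRel G.Adj]
    (hconn : G.Connected) (D : V → ℝ) (hD : ∀ i, 0 < D i) (d : V → V → ℝ)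
    (hopt : LexOpt G D d) (hK : ∃ i j, ratio G D d i ≠ ratio G D d j) :
    outFlow G d (maxSet G D d) = ∑ i ∈ maxSet G D d, D i := by
  classical
  obtain ⟨hpos, hsupp, hsum⟩ := hopt.1
  have hmemS : ∀ i, i ∈ maxSet G D d ↔ ratio G D d i = maxRatio G D d := by
    intro i; unfold maxSet; simp
  have hle : ∀ i, ratio G D d i ≤ maxRatio G D d := fun i =>
    Finset.le_sup' (ratio G D d) (Finset.mem_univ i)
  have hconsv : ∑ i, ratio G D d i * D i = ∑ i, D i := by
    have h := sum_recv G D d hopt.1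
    calc ∑ i, ratio G D d i * D i = ∑ i, recv G d i := by
          refine Finset.sum_congr rfl fun i _ => ?_
          unfold ratio
          exact div_mul_cancel₀ (recv G d i) (hD i).ne'
      _ = ∑ i, D i := h
  obtain ⟨i0, j0, hij⟩ := hK
  have hexlt : ∃ j, ratio G D d j < maxRatio G D d := by
    rcases lt_or_ge (ratio G D d i0) (maxRatio G D d) with h | h
    · exact ⟨i0, h⟩
    · have hi0 : ratio G D d i0 = maxRatio G D d := le_antisymm (hle i0) h
      refine ⟨j0, lt_of_le_of_ne (hle j0) ?_⟩
      intro hj0; exact hij (by rw [hi0, hj0])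
  have hM1 : 1 < maxRatio G D d := by
    by_contra hM1
    push_neg at hM1
    obtain ⟨j1, hj1⟩ := hexlt
    have hlt : ∑ i, ratio G D d i * D i < ∑ i, D i := by
      apply Finset.sum_lt_sum
      · intro i _
        calc ratio G D d i * D i ≤ 1 * D i :=
              mul_le_mul_of_nonneg_right (le_trans (hle i) hM1) (hD i).le
          _ = D i := one_mul _
      · refine ⟨j1, Finset.mem_univ j1, ?_⟩
        calc ratio G D d j1 * D j1 < 1 * D j1 :=
              mul_lt_mul_of_pos_right (lt_of_lt_of_le hj1 hM1) (hD j1)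
          _ = D j1 := one_mul _
    rw [hconsv] at hlt
    exact lt_irrefl _ hlt
  have hrecvS : ∀ v ∈ maxSet G D d, recv G d v = maxRatio G D d * D v := by
    intro v hv
    have h := (hmemS v).1 hv
    unfold ratio at h
    rw [div_eq_iff (hD v).ne'] at h
    exact h
  -- The set of max-ratio nodes sending positively into the max set
  set T : Finset V := (maxSet G D d).filter (fun v => ∃ w ∈ maxSet G D d, 0 < d v w) with hT
  have hTsub : T ⊆ maxSet G D d := Finset.filter_subset _ _
  have hsend : ∀ v ∈ T, ∀ p, 0 < d p v → p ∈ T := by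
    intro v hv p hpv
    have hv' := Finset.mem_filter.mp hv
    obtain ⟨w0, hw0S, hvw0⟩ := hv'.2
    have hpadj : G.Adj p v := by
      by_contra h; rw [hsupp p v h] at hpv; exact lt_irrefl _ hpv
    have hpS : p ∈ maxSet G D d := by
      have h := star_lemma G D hD d hopt hvw0 hpadj.symm
      rw [(hmemS w0).1 hw0S] at h
      exact (hmemS p).2 (le_antisymm (hle p) h)
    rw [hT, Finset.mem_filter]
    exact ⟨hpS, v, hv'.1, hpv⟩
  have hTempty : T = ∅ := by
    by_contra hne
    have hTne : T.Nonempty := Finset.nonempty_iff_ne_empty.mpr hne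
    have hDT : 0 < ∑ v ∈ T, D v := Finset.sum_pos (fun v _ => hD v) hTne
    have hfil : ∀ v : V, (G.neighborFinset v).filter (· ∈ T) = T.filter (fun p => G.Adj v p) := by
      intro v; ext p
      simp only [Finset.mem_filter, SimpleGraph.mem_neighborFinset]
      tauto
    have h1 : ∑ v ∈ T, recv G d v = ∑ v ∈ T, ∑ p ∈ T.filter (fun p => G.Adj v p), d p v := by
      refine Finset.sum_congr rfl fun v hv => ?_
      unfold recv
      rw [← Finset.sum_filter_add_sum_filter_not (G.neighborFinset v) (· ∈ T)]
      have hz : ∑ p ∈ (G.neighborFinset v).filter (fun p => ¬ p ∈ T), d p v = 0 := by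
        apply Finset.sum_eq_zero
        intro p hp
        rcases Finset.mem_filter.mp hp with ⟨hpN, hpnT⟩
        by_contra h
        exact hpnT (hsend v hv p (lt_of_le_of_ne (hpos p v) (Ne.symm h)))
      rw [hz, add_zero, hfil v]
    have h2 : ∑ v ∈ T, ∑ p ∈ T.filter (fun p => G.Adj v p), d p v
        = ∑ p ∈ T, ∑ v ∈ T.filter (fun v => G.Adj p v), d p v :=
      double_count G T (fun v p => d p v)
    have h3 : ∑ p ∈ T, ∑ v ∈ T.filter (fun v => G.Adj p v), d p v ≤ ∑ p ∈ T, D p := by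
      refine Finset.sum_le_sum fun p _ => ?_
      rw [← hsum p]
      have hsub2 : T.filter (fun v => G.Adj p v) ⊆ G.neighborFinset p := by
        intro v hv
        rw [SimpleGraph.mem_neighborFinset]
        exact (Finset.mem_filter.mp hv).2
      exact Finset.sum_le_sum_of_subset_of_nonneg hsub2 (fun i _ _ => hpos p i)
    have h4 : ∑ v ∈ T, recv G d v = maxRatio G D d * ∑ v ∈ T, D v := by
      rw [Finset.mul_sum]
      exact Finset.sum_congr rfl fun v hv => hrecvS v (hTsub hv)
    nlinarith [h1, h2, h3, h4, hDT, hM1]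
  unfold outFlow
  refine Finset.sum_congr rfl fun i hi => ?_
  rw [← hsum i]
  apply Finset.sum_subset
  · exact Finset.sdiff_subset
  · intro j hjN hjnot
    have hjS : j ∈ maxSet G D d := by
      by_contra h
      exact hjnot (Finset.mem_sdiff.mpr ⟨hjN, h⟩)
    by_contra h
    have hij : 0 < d i j := lt_of_le_of_ne (hpos i j) (Ne.symm h)
    have hiT : i ∈ T := by
      rw [hT, Finset.mem_filter]
      exact ⟨hi, j, hjS, hij⟩
    rw [hTempty] at hiT
    exact absurd hiT (Finset.notMem_empty i)
end
end

section
/- Suppose an allocation d̄ has at least two distinct exchange ratio levels, its minimum-ratio set L̄_1 is independent, and ∑_{i∈L̄_1} r̄_i = ∑_{i∈N(L̄_1)} D_i. Then L̄_1 equals the minimum-ratio set L*_1 of the (unique) lex-optimal exchange ratio vector, and the minimum ratio of d̄ equals the lex-optimal minimum level l*_1. -/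
open Finset

noncomputable section

variable {V : Type*}

lemma lex_of_count_lt {m : ℝ} : ∀ (l₂ l₁ : List ℝ), l₁.Pairwise (· ≤ ·) → l₂.Pairwise (· ≤ ·) →
    (∀ x ∈ l₁, m ≤ x) → (∀ x ∈ l₂, m ≤ x) →
    l₁.count m < l₂.count m → l₂.count m ≤ l₁.length →
    List.Lex (· < ·) l₂ l₁ := by
  intro l₂
  induction l₂ with
  | nil => intro l₁ _ _ _ _ hc _; simp at hc
  | cons b t₂ IH =>
    intro l₁ h₁ h₂ hm₁ hm₂ hc hl
    obtain ⟨hb2, ht2⟩ := List.pairwise_cons.mp h₂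
    have hb : b = m := by
      by_contra hbm
      have hmb : m < b := lt_of_le_of_ne (hm₂ b (by simp)) (Ne.symm hbm)
      have hz : (b :: t₂).count m = 0 := by
        rw [List.count_eq_zero]
        intro hmem
        rcases List.mem_cons.mp hmem with h | h
        · exact hbm h.symm
        · exact absurd (hb2 m h) (not_le.mpr hmb)
      omega
    subst hb
    rw [List.count_cons_self] at hc hl
    match l₁, h₁, hm₁, hc, hl with
    | [], _, _, hc, hl => simp at hl
    | a :: t₁, h₁, hm₁, hc, hl =>
      obtain ⟨ha1, ht1⟩ := List.pairwise_cons.mp h₁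
      rcases lt_or_eq_of_le (hm₁ a (by simp)) with hma | hma
      · exact List.Lex.rel hma
      · rw [← hma, List.count_cons_self] at hc
        rw [← hma]
        refine List.Lex.cons ?_
        exact IH t₁ ht1 ht2 (fun x hx => hm₁ x (by simp [hx])) (fun x hx => hm₂ x (by simp [hx]))
          (by omega) (by simpa using Nat.le_of_succ_le_succ hl)

lemma recv_eq_sum_univ [Fintype V] [DecidableEq V] (G : SimpleGraph V) [DecidableRel G.Adj]
    {D : V → ℝ} {d : V → V → ℝ} (hd : IsAlloc G D d) (i : V) :
    recv G d i = ∑ j ∈ univ, d j i := by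
  refine Finset.sum_subset (subset_univ _) ?_
  intro j _ hj
  exact hd.2.1 j i fun h => hj (by rw [SimpleGraph.mem_neighborFinset]; exact h.symm)

lemma send_eq_sum_univ [Fintype V] [DecidableEq V] (G : SimpleGraph V) [DecidableRel G.Adj]
    {D : V → ℝ} {d : V → V → ℝ} (hd : IsAlloc G D d) (j : V) :
    ∑ i ∈ univ, d j i = D j := by
  rw [← hd.2.2 j]
  refine (Finset.sum_subset (subset_univ _) ?_).symm
  intro i _ hi
  exact hd.2.1 j i fun h => hi (by rw [SimpleGraph.mem_neighborFinset]; exact h)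

lemma flow_bound [Fintype V] [DecidableEq V] (G : SimpleGraph V) [DecidableRel G.Adj]
    {D : V → ℝ} {d : V → V → ℝ} (hd : IsAlloc G D d) (L : Finset V)
    (hind : ∀ i ∈ L, ∀ j ∈ L, ¬ G.Adj i j) :
    ∑ i ∈ L, recv G d i ≤ ∑ j ∈ extNbhd G L, D j := by
  have h1 : ∑ i ∈ L, recv G d i = ∑ j ∈ univ, ∑ i ∈ L, d j i := by
    rw [Finset.sum_comm]
    exact Finset.sum_congr rfl fun i _ => recv_eq_sum_univ G hd i
  have h2 : ∑ j ∈ univ, ∑ i ∈ L, d j i = ∑ j ∈ extNbhd G L, ∑ i ∈ L, d j i := by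
    refine (Finset.sum_subset (subset_univ _) ?_).symm
    intro j _ hj
    refine Finset.sum_eq_zero fun i hi => ?_
    by_contra hne
    have hadj : G.Adj j i := by
      by_contra h; exact hne (hd.2.1 j i h)
    have hjmem : j ∈ L.biUnion fun i => G.neighborFinset i := by
      refine Finset.mem_biUnion.mpr ⟨i, hi, ?_⟩
      rw [SimpleGraph.mem_neighborFinset]; exact hadj.symm
    have hjL : j ∈ L := by
      by_contra hjL
      exact hj (Finset.mem_sdiff.mpr ⟨hjmem, hjL⟩)
    exact hind j hjL i hi hadj
  rw [h1, h2]
  refine Finset.sum_le_sum fun j _ => ?_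
  calc ∑ i ∈ L, d j i ≤ ∑ i ∈ univ, d j i :=
        Finset.sum_le_sum_of_subset_of_nonneg (subset_univ _) fun i _ _ => hd.1 j i
    _ = D j := send_eq_sum_univ G hd j

lemma sortedRatios_sorted [Fintype V] [DecidableEq V] (G : SimpleGraph V) [DecidableRel G.Adj]
    (D : V → ℝ) (d : V → V → ℝ) : (sortedRatios G D d).Pairwise (· ≤ ·) :=
  Multiset.pairwise_sort _ _

lemma mem_sortedRatios [Fintype V] [DecidableEq V] (G : SimpleGraph V) [DecidableRel G.Adj]
    {D : V → ℝ} {d : V → V → ℝ} {x : ℝ} :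
    x ∈ sortedRatios G D d ↔ ∃ i, ratio G D d i = x := by
  simp [sortedRatios, Multiset.mem_sort, Multiset.mem_map]

lemma count_sortedRatios [Fintype V] [DecidableEq V] (G : SimpleGraph V) [DecidableRel G.Adj]
    (D : V → ℝ) (d : V → V → ℝ) (x : ℝ) :
    (sortedRatios G D d).count x = (univ.filter (fun i => ratio G D d i = x)).card := by
  have : (sortedRatios G D d).count x = Multiset.count x (Finset.univ.val.map (ratio G D d)) := by
    rw [sortedRatios, ← Multiset.coe_count, Multiset.sort_eq]
  rw [this, Multiset.count_map]
  rw [show (filter (fun i => ratio G D d i = x) univ).card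
      = Multiset.card (Multiset.filter (fun a => ratio G D d a = x) univ.val) from rfl]
  congr 1
  exact Multiset.filter_congr fun a _ => eq_comm

lemma length_sortedRatios [Fintype V] [DecidableEq V] (G : SimpleGraph V) [DecidableRel G.Adj]
    (D : V → ℝ) (d : V → V → ℝ) :
    (sortedRatios G D d).length = Fintype.card V := by
  simp [sortedRatios, Multiset.length_sort]

theorem stmt14 [Fintype V] [Nonempty V] [DecidableEq V] (G : SimpleGraph V) [DecidableRel G.Adj]
    (hconn : G.Connected) (D : V → ℝ) (hD : ∀ i, 0 < D i)
    (dbar : V → V → ℝ) (hbar : IsAlloc G D dbar)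
    (hK : ∃ i j, ratio G D dbar i ≠ ratio G D dbar j)
    (hind : ∀ i ∈ minSet G D dbar, ∀ j ∈ minSet G D dbar, ¬ G.Adj i j)
    (hsum : ∑ i ∈ minSet G D dbar, recv G dbar i = ∑ i ∈ extNbhd G (minSet G D dbar), D i) :
    ∀ dstar : V → V → ℝ, LexOpt G D dstar →
      minSet G D dbar = minSet G D dstar ∧ minRatio G D dbar = minRatio G D dstar := by
  intro dstar hstar
  obtain ⟨hsA, hlex⟩ := hstar
  have hDne : ∀ i, D i ≠ 0 := fun i => ne_of_gt (hD i)
  have hrecv : ∀ (d : V → V → ℝ) (i : V), recv G d i = ratio G D d i * D i := by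
    intro d i; rw [ratio, div_mul_cancel₀ _ (hDne i)]
  have hmem_min : ∀ (d : V → V → ℝ) i, minRatio G D d ≤ ratio G D d i :=
    fun d i => Finset.inf'_le _ (mem_univ i)
  set L := minSet G D dbar with hLdef
  set m := minRatio G D dbar with hmdef
  have hLne : L.Nonempty := by
    obtain ⟨i, _, hi⟩ := Finset.exists_mem_eq_inf' (Finset.univ_nonempty (α := V))
      (ratio G D dbar)
    exact ⟨i, Finset.mem_filter.mpr ⟨Finset.mem_univ i, hi.symm⟩⟩
  have hrL : ∀ i ∈ L, ratio G D dbar i = m := fun i hi => (Finset.mem_filter.mp hi).2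
  have hsumbar : ∑ i ∈ L, recv G dbar i = ∑ i ∈ L, m * D i := by
    refine Finset.sum_congr rfl fun i hi => ?_
    rw [hrecv dbar i, hrL i hi]
  have hA : ∑ i ∈ L, recv G dstar i ≤ ∑ i ∈ L, m * D i := by
    calc ∑ i ∈ L, recv G dstar i ≤ ∑ j ∈ extNbhd G L, D j := flow_bound G hsA L hind
      _ = ∑ i ∈ L, recv G dbar i := hsum.symm
      _ = _ := hsumbar
  have h1 : ∃ i ∈ L, ratio G D dstar i ≤ m := by
    by_contra h
    push_neg at h
    have hlt : ∑ i ∈ L, m * D i < ∑ i ∈ L, recv G dstar i := by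
      refine Finset.sum_lt_sum_of_nonempty hLne fun i hi => ?_
      rw [hrecv dstar i]
      exact mul_lt_mul_of_pos_right (h i hi) (hD i)
    linarith
  obtain ⟨i1, hi1L, hi1⟩ := h1
  have hle : minRatio G D dstar ≤ m := le_trans (hmem_min dstar i1) hi1
  have hge : m ≤ minRatio G D dstar := by
    by_contra h
    push_neg at h
    refine hlex dbar hbar ?_
    refine lex_of_count_lt (m := minRatio G D dstar) _ _ (sortedRatios_sorted G D dbar)
      (sortedRatios_sorted G D dstar) ?_ ?_ ?_ ?_
    · intro x hx; obtain ⟨i, hi⟩ := (mem_sortedRatios G).mp hx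
      exact le_of_lt (lt_of_lt_of_le h (hi ▸ hmem_min dbar i))
    · intro x hx; obtain ⟨i, hi⟩ := (mem_sortedRatios G).mp hx
      exact hi ▸ hmem_min dstar i
    · have hz : (sortedRatios G D dbar).count (minRatio G D dstar) = 0 := by
        rw [List.count_eq_zero]
        intro hmem
        obtain ⟨i, hi⟩ := (mem_sortedRatios G).mp hmem
        exact absurd (hi ▸ hmem_min dbar i) (not_le.mpr h)
      have hp : 0 < (sortedRatios G D dstar).count (minRatio G D dstar) := by
        rw [List.count_pos_iff, mem_sortedRatios G]
        obtain ⟨i, _, hi⟩ := Finset.exists_mem_eq_inf' (Finset.univ_nonempty (α := V))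
          (ratio G D dstar)
        exact ⟨i, hi.symm⟩
      omega
    · calc (sortedRatios G D dstar).count (minRatio G D dstar)
          ≤ (sortedRatios G D dstar).length := List.count_le_length
        _ = (sortedRatios G D dbar).length := by
            rw [length_sortedRatios, length_sortedRatios]
  have hmm : minRatio G D dstar = m := le_antisymm hle hge
  have hsub : L ⊆ minSet G D dstar := by
    intro i hiL
    have hlb : ∀ j ∈ L, m * D j ≤ ratio G D dstar j * D j := fun j _ =>
      mul_le_mul_of_nonneg_right (hmm ▸ hmem_min dstar j) (le_of_lt (hD j))
    have hub : ∑ j ∈ L, ratio G D dstar j * D j ≤ ∑ j ∈ L, m * D j := by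
      calc ∑ j ∈ L, ratio G D dstar j * D j = ∑ j ∈ L, recv G dstar j :=
            Finset.sum_congr rfl fun j _ => (hrecv dstar j).symm
        _ ≤ _ := hA
    have heq := (Finset.sum_eq_sum_iff_of_le hlb).mp
      (le_antisymm (Finset.sum_le_sum hlb) hub) i hiL
    have hri : ratio G D dstar i = m := mul_right_cancel₀ (hDne i) heq.symm
    exact Finset.mem_filter.mpr ⟨Finset.mem_univ i, by rw [hri, hmm]⟩
  have hset : minSet G D dstar = L := by
    by_contra hne
    have hss : L ⊂ minSet G D dstar := Finset.ssubset_iff_subset_ne.mpr ⟨hsub, Ne.symm hne⟩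
    have hcard : L.card < (minSet G D dstar).card := Finset.card_lt_card hss
    refine hlex dbar hbar ?_
    refine lex_of_count_lt (m := m) _ _ (sortedRatios_sorted G D dbar)
      (sortedRatios_sorted G D dstar) ?_ ?_ ?_ ?_
    · intro x hx; obtain ⟨i, hi⟩ := (mem_sortedRatios G).mp hx; exact hi ▸ hmem_min dbar i
    · intro x hx; obtain ⟨i, hi⟩ := (mem_sortedRatios G).mp hx
      exact hi ▸ (hmm ▸ hmem_min dstar i)
    · rw [count_sortedRatios, count_sortedRatios]
      have e1 : (univ.filter fun i => ratio G D dbar i = m) = L := by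
        rw [hLdef, minSet, ← hmdef]
      have e2 : (univ.filter fun i => ratio G D dstar i = m) = minSet G D dstar := by
        rw [minSet, hmm]
      rw [e1, e2]; exact hcard
    · rw [count_sortedRatios, length_sortedRatios]
      calc ((univ.filter fun i => ratio G D dstar i = m)).card ≤ (univ : Finset V).card :=
            Finset.card_filter_le _ _
        _ = Fintype.card V := Finset.card_univ
  exact ⟨hset.symm, hmm.symm⟩
end
end
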